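/- For k ∈ ℕ and 2 ≤ p < ∞ with conjugate exponent q = p/(p-1), define γ_k(p) := Γ(1/p) Γ(1/q + k/2) / (Γ(1/q) Γ(1/p + k/2)). Then 1/2 ≤ γ_k(p) / (k^{1 - 2/p} (p-1)) ≤ 1, and both constants 1/2 and 1 are optimal. -/

import Mathlib

open Real Finset Filter Topology


lemma two_div_le_log_sub {c : ℝ} (hc : 2 ≤ c) :
    2 / c ≤ Real.log (c + 1) - Real.log (c - 1) := by
  have hc0 : (0:ℝ) < c := by linarith
  have h1 : (0:ℝ) < c - 1 := by linarith
  rw [← Real.log_div (by linarith) (by linarith)]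
  rw [Real.le_log_iff_exp_le (by positivity)]
  have hx0 : (0:ℝ) ≤ 2 / c := by positivity
  have hx1 : 2 / c ≤ 1 := by rw [div_le_one hc0]; linarith
  have hb := Real.exp_bound' hx0 hx1 (n := 4) (by norm_num)
  norm_num [Finset.sum_range_succ, Nat.factorial] at hb
  have he : rexp (2 / c) ≤ (c^4 + 2*c^3 + 2*c^2 + (4/3)*c + 5/6) / c^4 := by
    refine hb.trans (le_of_eq ?_)
    field_simp
    ring
  refine he.trans ?_
  rw [div_le_div_iff₀ (by positivity) h1]
  nlinarith [pow_pos hc0 2, pow_pos hc0 4, hc0]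

lemma sum_sub_shift_le {h : ℕ → ℝ} (hpos : ∀ i, 0 ≤ h i) (d N : ℕ) :
    ∑ i ∈ range N, (h i - h (d + i)) ≤ ∑ i ∈ range d, h i := by
  rw [Finset.sum_sub_distrib]
  have e : ∑ i ∈ range (d + N), h i = ∑ i ∈ range d, h i + ∑ i ∈ range N, h (d + i) :=
    Finset.sum_range_add h d N
  have hsub : ∑ i ∈ range N, h i ≤ ∑ i ∈ range (d + N), h i :=
    Finset.sum_le_sum_of_subset_of_nonneg (Finset.range_subset_range.mpr (by omega))
      (fun i _ _ => hpos i)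
  linarith

lemma psi_sum_le (k : ℕ) (hk : 2 ≤ k) {u : ℝ} (hu : 0 ≤ u) (N : ℕ) :
    ∑ i ∈ range N, (1/(u+1+i) - 1/(u+(k:ℝ)/2+i)) ≤ Real.log k := by
  have hk0 : (0:ℝ) < k := by positivity
  have hk1 : (1:ℝ) ≤ (k:ℝ) - 1 := by
    have : (2:ℝ) ≤ (k:ℝ) := by exact_mod_cast hk
    linarith
  have hlogk : Real.log ((k:ℝ) - 1) ≤ Real.log k := by
    apply Real.log_le_log (by linarith) (by linarith)
  rcases Nat.even_or_odd k with ⟨m, hm⟩ | ⟨m, hm⟩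
  · -- k = 2m
    have hm1 : 1 ≤ m := by omega
    set d := m - 1 with hd
    have hmd : (d:ℝ) = (m:ℝ) - 1 := by rw [hd]; push_cast [Nat.cast_sub hm1]; ring
    have hkr : (k:ℝ) = 2*(m:ℝ) := by exact_mod_cast (by omega : k = 2*m)
    have hterm : ∀ i : ℕ, (1/(u+1+(i:ℝ)) - 1/(u+(k:ℝ)/2+i))
        = (fun j : ℕ => 1/(u+1+(j:ℝ))) i - (fun j : ℕ => 1/(u+1+(j:ℝ))) (d + i) := by
      intro i
      simp only
      congr 2
      push_cast [hmd]
      linarith [hkr]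
    calc ∑ i ∈ range N, (1/(u+1+(i:ℝ)) - 1/(u+(k:ℝ)/2+i))
        = ∑ i ∈ range N, ((fun j : ℕ => 1/(u+1+(j:ℝ))) i - (fun j : ℕ => 1/(u+1+(j:ℝ))) (d + i)) :=
          Finset.sum_congr rfl (fun i _ => hterm i)
      _ ≤ ∑ i ∈ range d, 1/(u+1+(i:ℝ)) := sum_sub_shift_le (fun i => by positivity) d N
      _ ≤ ∑ i ∈ range d, ((fun j : ℕ => Real.log (2*(j:ℝ)+1)) (i+1)
            - (fun j : ℕ => Real.log (2*(j:ℝ)+1)) i) := by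
          apply Finset.sum_le_sum
          intro i _
          have hi : (0:ℝ) ≤ (i:ℝ) := Nat.cast_nonneg i
          have h2 : 1/(u+1+(i:ℝ)) ≤ 2/(2*(i:ℝ)+2) := by
            rw [div_le_div_iff₀ (by positivity) (by positivity)]
            nlinarith
          refine h2.trans ?_
          have h3 := two_div_le_log_sub (c := 2*(i:ℝ)+2) (by linarith)
          simp only
          push_cast
          convert h3 using 3
          · rfl
          · ring
          · ring
      _ = Real.log (2*((d:ℕ):ℝ)+1) - Real.log (2*((0:ℕ):ℝ)+1) :=
          Finset.sum_range_sub (fun j : ℕ => Real.log (2*(j:ℝ)+1)) d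
      _ ≤ Real.log k := by
          have h2d : 2*(d:ℝ)+1 = (k:ℝ) - 1 := by rw [hmd]; linarith
          rw [h2d]
          norm_num
          exact hlogk
  · -- k = 2m+1
    have hm1 : 1 ≤ m := by omega
    set d := m - 1 with hd
    have hmd : (d:ℝ) = (m:ℝ) - 1 := by rw [hd]; push_cast [Nat.cast_sub hm1]; ring
    have hkr : (k:ℝ) = 2*(m:ℝ)+1 := by exact_mod_cast (by omega : k = 2*m+1)
    have hsplit : ∀ i : ℕ, (1/(u+1+(i:ℝ)) - 1/(u+(k:ℝ)/2+i))
        = (1/(u+1+(i:ℝ)) - 1/(u+3/2+i))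
          + ((fun j : ℕ => 1/(u+3/2+(j:ℝ))) i - (fun j : ℕ => 1/(u+3/2+(j:ℝ))) (d + i)) := by
      intro i
      simp only
      have e : u+3/2+((d + i : ℕ):ℝ) = u+(k:ℝ)/2+i := by push_cast [hmd]; linarith [hkr]
      rw [e]; ring
    rw [Finset.sum_congr rfl (fun i _ => hsplit i), Finset.sum_add_distrib]
    have hfirst : ∑ i ∈ range N, (1/(u+1+(i:ℝ)) - 1/(u+3/2+i)) ≤ 2/3 := by
      have hb : ∀ i ∈ range N, (1/(u+1+(i:ℝ)) - 1/(u+3/2+i))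
          ≤ (fun j : ℕ => (1/2)/((j:ℝ)+3/4)) i - (fun j : ℕ => (1/2)/((j:ℝ)+3/4)) (i+1) := by
        intro i _
        have hi : (0:ℝ) ≤ (i:ℝ) := Nat.cast_nonneg i
        have e1 : 1/(u+1+(i:ℝ)) - 1/(u+3/2+i) = (1/2)/((u+1+i)*(u+3/2+i)) := by
          rw [div_sub_div _ _ (by positivity) (by positivity)]
          congr 1; ring
        have e2 : (fun j : ℕ => (1/2)/((j:ℝ)+3/4)) i - (fun j : ℕ => (1/2)/((j:ℝ)+3/4)) (i+1)
            = (1/2)/(((i:ℝ)+3/4)*((i:ℝ)+7/4)) := by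
          simp only
          rw [div_sub_div _ _ (by positivity) (by positivity)]
          push_cast
          rw [div_eq_div_iff (by positivity) (by positivity)]
          ring
        rw [e1, e2]
        rw [div_le_div_iff₀ (by positivity) (by positivity)]
        nlinarith
      have htel := Finset.sum_range_sub' (fun j : ℕ => (1/2)/((j:ℝ)+3/4)) N
      have hN : (0:ℝ) ≤ (1/2)/((N:ℝ)+3/4) := by positivity
      calc ∑ i ∈ range N, (1/(u+1+(i:ℝ)) - 1/(u+3/2+i))
          ≤ ∑ i ∈ range N, ((fun j : ℕ => (1/2)/((j:ℝ)+3/4)) i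
              - (fun j : ℕ => (1/2)/((j:ℝ)+3/4)) (i+1)) := Finset.sum_le_sum hb
        _ ≤ 2/3 := by rw [htel]; simp only [Nat.cast_zero]; linarith
    have hsecond : ∑ i ∈ range N, ((fun j : ℕ => 1/(u+3/2+(j:ℝ))) i
        - (fun j : ℕ => 1/(u+3/2+(j:ℝ))) (d + i)) ≤ Real.log ((k:ℝ)-1) - Real.log 2 := by
      calc ∑ i ∈ range N, ((fun j : ℕ => 1/(u+3/2+(j:ℝ))) i - (fun j : ℕ => 1/(u+3/2+(j:ℝ))) (d + i))
          ≤ ∑ i ∈ range d, 1/(u+3/2+(i:ℝ)) := sum_sub_shift_le (fun i => by positivity) d N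
        _ ≤ ∑ i ∈ range d, ((fun j : ℕ => Real.log (2*(j:ℝ)+2)) (i+1)
              - (fun j : ℕ => Real.log (2*(j:ℝ)+2)) i) := by
            apply Finset.sum_le_sum
            intro i _
            have hi : (0:ℝ) ≤ (i:ℝ) := Nat.cast_nonneg i
            have h2 : 1/(u+3/2+(i:ℝ)) ≤ 2/(2*(i:ℝ)+3) := by
              rw [div_le_div_iff₀ (by positivity) (by positivity)]
              nlinarith
            refine h2.trans ?_
            have h3 := two_div_le_log_sub (c := 2*(i:ℝ)+3) (by linarith)
            simp only
            push_cast
            convert h3 using 3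
            · rfl
            · ring
            · ring
        _ = Real.log (2*((d:ℕ):ℝ)+2) - Real.log (2*((0:ℕ):ℝ)+2) :=
            Finset.sum_range_sub (fun j : ℕ => Real.log (2*(j:ℝ)+2)) d
        _ ≤ Real.log ((k:ℝ)-1) - Real.log 2 := by
            have h2d : 2*(d:ℝ)+2 = (k:ℝ) - 1 := by rw [hmd]; linarith
            rw [h2d]
            norm_num
    have hlog2 : (2:ℝ)/3 ≤ Real.log 2 := by
      have := Real.log_two_gt_d9
      linarith
    linarith


lemma gamma_phi_key (k : ℕ) (hk : 1 ≤ k) {a b : ℝ} (ha : 0 ≤ a) (hab : a ≤ b) (hb : b ≤ 1) :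
    Real.Gamma (b + (k:ℝ)/2) * Real.Gamma (a + 1)
      ≤ Real.Gamma (a + (k:ℝ)/2) * Real.Gamma (b + 1) * (k:ℝ) ^ (b - a) := by
  have hk0 : (0:ℝ) < k := by exact_mod_cast hk
  set t : ℝ := (k:ℝ)/2 with htdef
  have ht : 0 < t := by positivity
  set C : ℝ := (k:ℝ) ^ (b - a) with hC
  have hC0 : 0 < C := Real.rpow_pos_of_pos hk0 _
  have hzsum : ∀ N : ℕ, ∑ i ∈ range N, ((b-a)*(t-1)/((b+t+i)*(a+1+i))) ≤ (b-a) * Real.log k := by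
    intro N
    rcases eq_or_lt_of_le hk with h1 | h2
    · -- k = 1
      have ht12 : t = 1/2 := by rw [htdef, ← h1]; norm_num
      have hle : ∑ i ∈ range N, ((b-a)*(t-1)/((b+t+i)*(a+1+i))) ≤ ∑ i ∈ range N, (0:ℝ) := by
        apply Finset.sum_le_sum
        intro i _
        have hi : (0:ℝ) ≤ (i:ℝ) := Nat.cast_nonneg i
        apply div_nonpos_of_nonpos_of_nonneg
        · nlinarith
        · have h1' : (0:ℝ) ≤ b+t+i := by nlinarith
          have h2' : (0:ℝ) ≤ a+1+i := by nlinarith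
          exact mul_nonneg h1' h2'
      simp only [Finset.sum_const_zero] at hle
      have hl1 : Real.log (k:ℝ) = 0 := by rw [← h1]; simp
      rw [hl1, mul_zero]
      exact hle
    · -- k ≥ 2
      have hk2 : 2 ≤ k := h2
      have ht1 : 1 ≤ t := by
        rw [htdef]
        have : (2:ℝ) ≤ (k:ℝ) := by exact_mod_cast hk2
        linarith
      have hstep : ∀ i ∈ range N, ((b-a)*(t-1)/((b+t+i)*(a+1+i)))
          ≤ (b-a) * (1/(a+1+i) - 1/(a+t+i)) := by
        intro i _
        have hi : (0:ℝ) ≤ (i:ℝ) := Nat.cast_nonneg i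
        have p1 : (0:ℝ) < a+1+i := by linarith
        have p2 : (0:ℝ) < a+t+i := by linarith
        have p3 : (0:ℝ) < b+t+i := by linarith
        have e : 1/(a+1+(i:ℝ)) - 1/(a+t+i) = (t-1)/((a+1+i)*(a+t+i)) := by
          rw [div_sub_div _ _ (ne_of_gt p1) (ne_of_gt p2)]
          congr 1 <;> ring
        rw [e, mul_div_assoc']
        rw [div_le_div_iff₀ (mul_pos p3 p1) (mul_pos p1 p2)]
        nlinarith [mul_nonneg (mul_nonneg (mul_nonneg (sub_nonneg.2 hab) (sub_nonneg.2 ht1))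
          p1.le) (sub_nonneg.2 hab)]
      calc ∑ i ∈ range N, ((b-a)*(t-1)/((b+t+i)*(a+1+i)))
          ≤ ∑ i ∈ range N, ((b-a) * (1/(a+1+i) - 1/(a+t+i))) := Finset.sum_le_sum hstep
        _ = (b-a) * ∑ i ∈ range N, (1/(a+1+i) - 1/(a+t+i)) := by rw [Finset.mul_sum]
        _ ≤ (b-a) * Real.log k := by
            apply mul_le_mul_of_nonneg_left ?_ (by linarith)
            have := psi_sum_le k hk2 ha N
            rw [htdef]
            exact this
  have hprod : ∀ N : ℕ, (∏ i ∈ range N, ((a+t+i)*(b+1+i)))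
      ≤ C * ∏ i ∈ range N, ((b+t+i)*(a+1+i)) := by
    intro N
    have hfac : ∀ i ∈ range N, (a+t+(i:ℝ))*(b+1+i)
        ≤ ((b+t+i)*(a+1+i)) * Real.exp ((b-a)*(t-1)/((b+t+i)*(a+1+i))) := by
      intro i _
      have hi : (0:ℝ) ≤ (i:ℝ) := Nat.cast_nonneg i
      have p1 : (0:ℝ) < a+1+i := by linarith
      have p3 : (0:ℝ) < b+t+i := by linarith
      have hden : (0:ℝ) < (b+t+i)*(a+1+i) := mul_pos p3 p1
      have hz := Real.add_one_le_exp ((b-a)*(t-1)/((b+t+i)*(a+1+i)))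
      have heq : (a+t+(i:ℝ))*(b+1+i)
          = ((b+t+i)*(a+1+i)) * (((b-a)*(t-1)/((b+t+i)*(a+1+i))) + 1) := by
        field_simp
        ring
      rw [heq]
      exact mul_le_mul_of_nonneg_left hz (le_of_lt hden)
    have hexple : Real.exp (∑ i ∈ range N, ((b-a)*(t-1)/((b+t+i)*(a+1+i)))) ≤ C := by
      calc Real.exp (∑ i ∈ range N, ((b-a)*(t-1)/((b+t+i)*(a+1+i))))
          ≤ Real.exp ((b-a) * Real.log k) := by rw [Real.exp_le_exp]; exact hzsum N
        _ = C := by rw [hC, ← Real.log_rpow hk0 (b-a), Real.exp_log (Real.rpow_pos_of_pos hk0 _)]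
    calc (∏ i ∈ range N, ((a+t+i)*(b+1+i)))
        ≤ ∏ i ∈ range N, (((b+t+i)*(a+1+i)) * Real.exp ((b-a)*(t-1)/((b+t+i)*(a+1+i)))) := by
          apply Finset.prod_le_prod ?_ hfac
          intro i _
          have hi : (0:ℝ) ≤ (i:ℝ) := Nat.cast_nonneg i
          have p2 : (0:ℝ) ≤ a+t+i := by nlinarith
          have p4 : (0:ℝ) ≤ b+1+i := by nlinarith
          exact mul_nonneg p2 p4
      _ = (∏ i ∈ range N, ((b+t+i)*(a+1+i)))
            * Real.exp (∑ i ∈ range N, ((b-a)*(t-1)/((b+t+i)*(a+1+i)))) := by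
          rw [Finset.prod_mul_distrib, Real.exp_sum]
      _ ≤ (∏ i ∈ range N, ((b+t+i)*(a+1+i))) * C := by
          apply mul_le_mul_of_nonneg_left hexple
          apply Finset.prod_nonneg
          intro i _
          have hi : (0:ℝ) ≤ (i:ℝ) := Nat.cast_nonneg i
          have p1 : (0:ℝ) ≤ a+1+i := by linarith
          have p3 : (0:ℝ) ≤ b+t+i := by nlinarith
          exact mul_nonneg p3 p1
      _ = C * ∏ i ∈ range N, ((b+t+i)*(a+1+i)) := mul_comm _ _
  have hbt : 0 < b + t := by nlinarith
  have hat : 0 < a + t := by nlinarith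
  have ha1 : 0 < a + 1 := by linarith
  have hb1 : 0 < b + 1 := by linarith
  have hseq : ∀ n : ℕ, Real.GammaSeq (b+t) n * Real.GammaSeq (a+1) n
      ≤ C * (Real.GammaSeq (a+t) n * Real.GammaSeq (b+1) n) := by
    intro n
    have hP : ∀ s : ℝ, 0 < s → 0 < ∏ j ∈ range (n+1), (s + (j:ℝ)) := by
      intro s hs
      apply Finset.prod_pos
      intro j _
      have : (0:ℝ) ≤ (j:ℝ) := Nat.cast_nonneg j
      linarith
    simp only [Real.GammaSeq]
    rcases Nat.eq_zero_or_pos n with rfl | hn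
    · simp [Real.zero_rpow (ne_of_gt hbt), Real.zero_rpow (ne_of_gt hat)]
    · have hn0 : (0:ℝ) < (n:ℝ) := by exact_mod_cast hn
      have hnum' : (n:ℝ) ^ (b+t) * (n.factorial:ℝ) * ((n:ℝ) ^ (a+1) * (n.factorial:ℝ))
          = (n:ℝ) ^ (a+t) * (n.factorial:ℝ) * ((n:ℝ) ^ (b+1) * (n.factorial:ℝ)) := by
        rw [mul_mul_mul_comm, ← Real.rpow_add hn0, mul_mul_mul_comm ((n:ℝ) ^ (a+t)),
          ← Real.rpow_add hn0]
        congr 2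
        ring
      have e1 : (∏ j ∈ range (n+1), (a+t+(j:ℝ))) * (∏ j ∈ range (n+1), (b+1+(j:ℝ)))
          = ∏ i ∈ range (n+1), ((a+t+(i:ℝ))*(b+1+i)) := (Finset.prod_mul_distrib).symm
      have e2 : (∏ j ∈ range (n+1), (b+t+(j:ℝ))) * (∏ j ∈ range (n+1), (a+1+(j:ℝ)))
          = ∏ i ∈ range (n+1), ((b+t+(i:ℝ))*(a+1+i)) := (Finset.prod_mul_distrib).symm
      have hA : (0:ℝ) ≤ (n:ℝ) ^ (a+t) * (n.factorial:ℝ) * ((n:ℝ) ^ (b+1) * (n.factorial:ℝ)) := by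
        positivity
      rw [div_mul_div_comm, div_mul_div_comm, mul_div_assoc',
        div_le_div_iff₀ (mul_pos (hP _ hbt) (hP _ ha1)) (mul_pos (hP _ hat) (hP _ hb1)), hnum']
      calc (n:ℝ) ^ (a+t) * (n.factorial:ℝ) * ((n:ℝ) ^ (b+1) * (n.factorial:ℝ))
            * ((∏ j ∈ range (n+1), (a+t+(j:ℝ))) * ∏ j ∈ range (n+1), (b+1+(j:ℝ)))
          ≤ (n:ℝ) ^ (a+t) * (n.factorial:ℝ) * ((n:ℝ) ^ (b+1) * (n.factorial:ℝ))
            * (C * ∏ i ∈ range (n+1), ((b+t+(i:ℝ))*(a+1+i))) := by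
            apply mul_le_mul_of_nonneg_left ?_ hA
            rw [e1]
            exact hprod (n+1)
        _ = C * ((n:ℝ) ^ (a+t) * (n.factorial:ℝ) * ((n:ℝ) ^ (b+1) * (n.factorial:ℝ)))
            * ((∏ j ∈ range (n+1), (b+t+(j:ℝ))) * ∏ j ∈ range (n+1), (a+1+(j:ℝ))) := by
            rw [e2]
            ring
  have hlim1 : Tendsto (fun n => Real.GammaSeq (b+t) n * Real.GammaSeq (a+1) n) atTop
      (𝓝 (Real.Gamma (b+t) * Real.Gamma (a+1))) :=
    (Real.GammaSeq_tendsto_Gamma (b+t)).mul (Real.GammaSeq_tendsto_Gamma (a+1))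
  have hlim2 : Tendsto (fun n => C * (Real.GammaSeq (a+t) n * Real.GammaSeq (b+1) n)) atTop
      (𝓝 (C * (Real.Gamma (a+t) * Real.Gamma (b+1)))) :=
    ((Real.GammaSeq_tendsto_Gamma (a+t)).mul (Real.GammaSeq_tendsto_Gamma (b+1))).const_mul C
  have hfin := le_of_tendsto_of_tendsto' hlim1 hlim2 hseq
  calc Real.Gamma (b + t) * Real.Gamma (a + 1) ≤ C * (Real.Gamma (a+t) * Real.Gamma (b+1)) := hfin
    _ = Real.Gamma (a + t) * Real.Gamma (b + 1) * C := by ring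


/-- `γ_k(p) = Γ(1/p) Γ(1/q + k/2) / (Γ(1/q) Γ(1/p + k/2))` with `q = p/(p-1)`. -/
noncomputable def gammaRatio (k : ℕ) (p : ℝ) : ℝ :=
  Real.Gamma (1 / p) * Real.Gamma ((1 - 1 / p) + k / 2) /
    (Real.Gamma (1 - 1 / p) * Real.Gamma (1 / p + k / 2))

theorem gammaRatio_bounds :
    (∀ k : ℕ, 1 ≤ k → ∀ p : ℝ, 2 ≤ p →
      1 / 2 ≤ gammaRatio k p / ((k : ℝ) ^ (1 - 2 / p) * (p - 1)) ∧
      gammaRatio k p / ((k : ℝ) ^ (1 - 2 / p) * (p - 1)) ≤ 1) ∧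
    (∀ c : ℝ, 1 / 2 < c → ∃ k : ℕ, 1 ≤ k ∧ ∃ p : ℝ, 2 ≤ p ∧
      gammaRatio k p / ((k : ℝ) ^ (1 - 2 / p) * (p - 1)) < c) ∧
    (∀ C : ℝ, C < 1 → ∃ k : ℕ, 1 ≤ k ∧ ∃ p : ℝ, 2 ≤ p ∧
      C < gammaRatio k p / ((k : ℝ) ^ (1 - 2 / p) * (p - 1))) := by
  refine ⟨?_, ?_, ?_⟩
  · intro k hk p hp
    have hp0 : (0:ℝ) < p := by linarith
    have hk0 : (0:ℝ) < (k:ℝ) := by exact_mod_cast hk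
    set x : ℝ := 1 / p with hxdef
    set t : ℝ := (k:ℝ)/2 with htdef
    have hx0 : 0 < x := by positivity
    have hx2 : x ≤ 1/2 := by rw [hxdef, div_le_div_iff₀ hp0 (by norm_num)]; linarith
    set y : ℝ := 1 - x with hydef
    have hy2 : 1/2 ≤ y := by rw [hydef]; linarith
    have hy1 : y ≤ 1 := by rw [hydef]; linarith
    have hxy : x ≤ y := by linarith
    have hsum : x + y = 1 := by rw [hydef]; ring
    have ht0 : 0 < t := by positivity
    -- Gamma positivity
    have Gx := Real.Gamma_pos_of_pos hx0
    have Gy := Real.Gamma_pos_of_pos (by linarith : (0:ℝ) < y)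
    have Gt := Real.Gamma_pos_of_pos ht0
    have Gxt := Real.Gamma_pos_of_pos (by linarith : (0:ℝ) < x + t)
    have Gyt := Real.Gamma_pos_of_pos (by linarith : (0:ℝ) < y + t)
    have Gx1 := Real.Gamma_pos_of_pos (by linarith : (0:ℝ) < x + 1)
    have Gy1 := Real.Gamma_pos_of_pos (by linarith : (0:ℝ) < y + 1)
    -- gammaRatio in terms of x y t
    have hgr : gammaRatio k p = Real.Gamma x * Real.Gamma (y + t) /
        (Real.Gamma y * Real.Gamma (x + t)) := rfl
    have hexp : 1 - 2/p = y - x := by rw [hydef, hxdef]; ring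
    have hpy : p - 1 = y / x := by
      rw [hydef, hxdef]
      field_simp
    have hKpos : (0:ℝ) < (k:ℝ) ^ (y - x) := Real.rpow_pos_of_pos hk0 _
    have hD : (0:ℝ) < (k : ℝ) ^ (1 - 2 / p) * (p - 1) := by
      rw [hexp, hpy]
      positivity
    -- functional equations
    have hGx1 : Real.Gamma (x + 1) = x * Real.Gamma x := Real.Gamma_add_one (ne_of_gt hx0)
    have hGy1 : Real.Gamma (y + 1) = y * Real.Gamma y := Real.Gamma_add_one (by positivity)
    constructor
    · -- lower bound
      rw [le_div_iff₀ hD, hgr, hexp, hpy, le_div_iff₀ (by positivity)]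
      -- goal : 1/2 * (k^(y-x) * (y/x)) * (Γy * Γ(x+t)) ≤ Γx * Γ(y+t)
      have key2 := gamma_phi_key k hk (a := 0) (b := x) le_rfl hx0.le (by linarith)
      rw [zero_add, zero_add, Real.Gamma_one, mul_one, sub_zero, hGx1] at key2
      -- key2 : Γ(x+t) ≤ Γ t * (x * Γ x) * k^x
      have key3 := gamma_phi_key k hk (a := y) (b := 1) (by linarith) hy1 le_rfl
      rw [(by norm_num : (1:ℝ) + 1 = (2:ℝ)), Real.Gamma_two, mul_one,
        (by rw [add_comm] : (1:ℝ) + t = t + 1),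
        Real.Gamma_add_one (ne_of_gt ht0), hGy1] at key3
      -- key3 : t * Γ t * (y * Γ y) ≤ Γ(y+t) * k^(1-y)
      have h1y : (1:ℝ) - y = x := by linarith
      rw [h1y] at key3
      have hKxy : (k:ℝ) ^ (y-x) * ((k:ℝ) ^ x * (k:ℝ) ^ x) = (k:ℝ) := by
        rw [← Real.rpow_add hk0, ← Real.rpow_add hk0]
        rw [(by ring : y - x + (x + x) = x + y), hsum, Real.rpow_one]
      have hKx : (0:ℝ) < (k:ℝ) ^ x := Real.rpow_pos_of_pos hk0 _
      have s1 : Real.Gamma y * Real.Gamma (x+t)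
          ≤ Real.Gamma y * (Real.Gamma t * (x * Real.Gamma x) * (k:ℝ) ^ x) :=
        mul_le_mul_of_nonneg_left key2 Gy.le
      have s3 : t * Real.Gamma t * (y * Real.Gamma y) * ((k:ℝ) ^ x)
          ≤ Real.Gamma (y+t) * (k:ℝ) ^ x * ((k:ℝ) ^ x) :=
        mul_le_mul_of_nonneg_right key3 hKx.le
      have ht_eq : t = (k:ℝ)/2 := htdef
      calc 1/2 * ((k:ℝ) ^ (y-x) * (y/x)) * (Real.Gamma y * Real.Gamma (x+t))
          ≤ 1/2 * ((k:ℝ) ^ (y-x) * (y/x))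
              * (Real.Gamma y * (Real.Gamma t * (x * Real.Gamma x) * (k:ℝ) ^ x)) := by
            apply mul_le_mul_of_nonneg_left s1 (by positivity)
        _ = (1/2) * ((k:ℝ) ^ (y-x)) * Real.Gamma x / t
              * (t * Real.Gamma t * (y * Real.Gamma y) * ((k:ℝ) ^ x)) := by
            field_simp
        _ ≤ (1/2) * ((k:ℝ) ^ (y-x)) * Real.Gamma x / t
              * (Real.Gamma (y+t) * (k:ℝ) ^ x * ((k:ℝ) ^ x)) := by
            apply mul_le_mul_of_nonneg_left s3 (by positivity)
        _ = Real.Gamma x * Real.Gamma (y+t)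
              * ((1/2) * ((k:ℝ) ^ (y-x) * ((k:ℝ) ^ x * (k:ℝ) ^ x)) / t) := by ring
        _ = Real.Gamma x * Real.Gamma (y+t) := by
            rw [hKxy, ht_eq]
            field_simp
    · -- upper bound
      rw [div_le_one hD, hgr, hexp, hpy, div_le_iff₀ (by positivity)]
      -- goal : Γ x * Γ (y+t) ≤ k^(y-x) * (y/x) * (Γ y * Γ (x+t))
      have key1 := gamma_phi_key k hk (a := x) (b := y) hx0.le hxy hy1
      rw [hGx1, hGy1] at key1
      -- key1 : Γ(y+t) * (x * Γ x) ≤ Γ(x+t) * (y * Γ y) * k^(y-x)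
      rw [← mul_le_mul_iff_right₀ hx0]
      calc x * (Real.Gamma x * Real.Gamma (y+t)) = Real.Gamma (y+t) * (x * Real.Gamma x) := by ring
        _ ≤ Real.Gamma (x+t) * (y * Real.Gamma y) * (k:ℝ) ^ (y-x) := key1
        _ = x * ((k:ℝ) ^ (y-x) * (y/x) * (Real.Gamma y * Real.Gamma (x+t))) := by
            field_simp
  ·
    intro c hc
    refine ⟨2, by norm_num, max 2 (4 * Real.log 2 / Real.log (2*c)), le_max_left _ _, ?_⟩
    set p : ℝ := max 2 (4 * Real.log 2 / Real.log (2*c)) with hpdef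
    have hp2 : (2:ℝ) ≤ p := le_max_left _ _
    have hp0 : (0:ℝ) < p := by linarith
    have hp1 : (0:ℝ) < p - 1 := by linarith
    have hc0 : (0:ℝ) < c := by linarith
    have hlc : (0:ℝ) < Real.log (2*c) := Real.log_pos (by linarith)
    have hl2 : (0:ℝ) < Real.log 2 := Real.log_pos (by norm_num)
    have hx0 : (0:ℝ) < 1/p := by positivity
    have hy0 : (0:ℝ) < 1 - 1/p := by
      have : 1/p ≤ 1/2 := by rw [div_le_div_iff₀ hp0 (by norm_num)]; linarith
      linarith
    have Gx := Real.Gamma_pos_of_pos hx0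
    have Gy := Real.Gamma_pos_of_pos hy0
    have hgr2 : gammaRatio 2 p = p - 1 := by
      unfold gammaRatio
      have hcast : ((2:ℕ):ℝ)/2 = 1 := by norm_num
      rw [hcast, Real.Gamma_add_one (ne_of_gt hy0), Real.Gamma_add_one (ne_of_gt hx0)]
      field_simp [ne_of_gt Gx, ne_of_gt Gy]
    have hcast2 : ((2:ℕ):ℝ) = 2 := by norm_num
    rw [hgr2, hcast2]
    have h2p : (0:ℝ) < (2:ℝ) ^ (1 - 2/p) := Real.rpow_pos_of_pos (by norm_num) _
    have hE : (p - 1) / ((2:ℝ) ^ (1 - 2/p) * (p - 1)) = Real.exp ((2/p - 1) * Real.log 2) := by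
      rw [mul_comm, div_mul_eq_div_div, div_self (ne_of_gt hp1), one_div, ← Real.rpow_neg (by norm_num : (0:ℝ) ≤ 2)]
      rw [Real.rpow_def_of_pos (by norm_num : (0:ℝ) < 2)]
      ring_nf
    rw [hE]
    have h4 : 4 * Real.log 2 ≤ p * Real.log (2*c) := by
      have h := mul_le_mul_of_nonneg_right (le_max_right 2 (4 * Real.log 2 / Real.log (2*c))) hlc.le
      rwa [div_mul_cancel₀ _ (ne_of_gt hlc)] at h
    have hineq : (2/p) * Real.log 2 ≤ Real.log (2*c) / 2 := by
      rw [div_mul_eq_mul_div, div_le_div_iff₀ hp0 (by norm_num : (0:ℝ) < 2)]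
      nlinarith
    have hlc_eq : Real.log (2*c) = Real.log 2 + Real.log c := Real.log_mul (by norm_num) (ne_of_gt hc0)
    have hhalf : -Real.log 2 < Real.log c := by
      have h := Real.log_lt_log (by norm_num : (0:ℝ) < 1/2) hc
      rwa [one_div, Real.log_inv] at h
    have hfin : (2/p - 1) * Real.log 2 < Real.log c := by nlinarith
    calc Real.exp ((2/p - 1) * Real.log 2) < Real.exp (Real.log c) := Real.exp_lt_exp.2 hfin
      _ = c := Real.exp_log hc0
  ·
    intro C hC
    refine ⟨1, le_rfl, 2, le_rfl, ?_⟩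
    have h12 : (0:ℝ) < Real.Gamma (1/2) := Real.Gamma_pos_of_pos (by norm_num)
    have e : gammaRatio 1 2 = 1 := by
      unfold gammaRatio
      norm_num
      exact h12.ne'
    rw [e]
    have : ((1:ℕ):ℝ) ^ ((1:ℝ) - 2/2) = 1 := by
      norm_num
    rw [this]
    norm_num
    exact hC
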